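/- arXiv:2403.05454 — 4 statements merged into one kernel-verified Lean document; each statement's English description precedes it below -/
import Mathlib

section
/- Let w be a control on [0,T]. Then for every u ∈ (0,T], one has ∫₀^{T−u} w(s, s+u) ds ≤ 2 u · w(0,T). -/
open MeasureTheory

/-- if `w` is a control on `[0,T]`, then for every `u ∈ (0,T]`,
`∫₀^{T−u} w(s, s+u) ds ≤ 2·u·w(0,T)`. -/
theorem integral_control_shift_le
    (T : ℝ) (hT : 0 ≤ T) (w : ℝ → ℝ → ℝ)
    (h_nonneg : ∀ s t, 0 ≤ s → s ≤ t → t ≤ T → 0 ≤ w s t)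
    (h_cont : ContinuousOn (fun q : ℝ × ℝ => w q.1 q.2)
      {q : ℝ × ℝ | 0 ≤ q.1 ∧ q.1 ≤ q.2 ∧ q.2 ≤ T})
    (h_diag : ∀ s, 0 ≤ s → s ≤ T → w s s = 0)
    (h_super : ∀ s u t, 0 ≤ s → s ≤ u → u ≤ t → t ≤ T →
      w s u + w u t ≤ w s t)
    (u : ℝ) (hu : 0 < u) (huT : u ≤ T) :
    ∫ s in (0:ℝ)..(T - u), w s (s + u) ≤ 2 * u * w 0 T := by
  have hTu : 0 ≤ T - u := by linarith
  set F : ℝ → ℝ := fun s => w 0 s with hF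
  -- continuity of F on [0,T]
  have hFcont : ContinuousOn F (Set.Icc 0 T) := by
    have hc : ContinuousOn (fun s : ℝ => ((0:ℝ), s)) (Set.Icc 0 T) := by fun_prop
    exact h_cont.comp hc (fun s hs => ⟨le_refl 0, hs.1, hs.2⟩)
  -- integrability of F on subintervals of [0,T]
  have hFint : ∀ a b : ℝ, 0 ≤ a → a ≤ b → b ≤ T → IntervalIntegrable F volume a b := by
    intro a b ha hab hbT
    exact (hFcont.mono (by rw [Set.uIcc_of_le hab]; exact Set.Icc_subset_Icc ha hbT)).intervalIntegrable
  -- continuity/integrability of s ↦ w s (s+u)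
  have hGcont : ContinuousOn (fun s => w s (s + u)) (Set.Icc 0 (T - u)) := by
    have hc : ContinuousOn (fun s : ℝ => (s, s + u)) (Set.Icc 0 (T - u)) := by fun_prop
    exact h_cont.comp hc (fun s hs => ⟨hs.1, by dsimp only; linarith [hu.le, hs.1, hs.2], by dsimp only; linarith [hs.1, hs.2]⟩)
  have hGint : IntervalIntegrable (fun s => w s (s + u)) volume 0 (T - u) := by
    exact (hGcont.mono (by rw [Set.uIcc_of_le hTu])).intervalIntegrable
  -- continuity/integrability of s ↦ F (s+u)
  have hF2cont : ContinuousOn (fun s => F (s + u)) (Set.Icc 0 (T - u)) := by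
    have hc : ContinuousOn (fun s : ℝ => ((0:ℝ), s + u)) (Set.Icc 0 (T - u)) := by fun_prop
    exact h_cont.comp hc (fun s hs => ⟨le_refl 0, by dsimp only; linarith [hs.1, hu.le], by dsimp only; linarith [hs.1, hs.2]⟩)
  have hF2int : IntervalIntegrable (fun s => F (s + u)) volume 0 (T - u) := by
    exact (hF2cont.mono (by rw [Set.uIcc_of_le hTu])).intervalIntegrable
  have hF1int : IntervalIntegrable F volume 0 (T - u) := hFint 0 (T - u) le_rfl hTu (by linarith)
  -- pointwise bound
  have key : ∀ s ∈ Set.Icc (0:ℝ) (T - u), w s (s + u) ≤ F (s + u) - F s := by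
    intro s hs
    have := h_super 0 s (s + u) le_rfl hs.1 (by linarith [hu.le]) (by linarith [hs.2])
    simp only [hF]
    linarith
  -- step 1
  have step1 : ∫ s in (0:ℝ)..(T - u), w s (s + u)
      ≤ ∫ s in (0:ℝ)..(T - u), (F (s + u) - F s) :=
    intervalIntegral.integral_mono_on hTu hGint (hF2int.sub hF1int) key
  -- step 2: telescoping
  have hshift : ∫ s in (0:ℝ)..(T - u), F (s + u) = ∫ s in u..T, F s := by
    rw [intervalIntegral.integral_comp_add_right F u]
    norm_num
  have hsplit1 : (∫ s in (0:ℝ)..u, F s) + ∫ s in u..T, F s = ∫ s in (0:ℝ)..T, F s :=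
    intervalIntegral.integral_add_adjacent_intervals
      (hFint 0 u le_rfl hu.le huT) (hFint u T hu.le huT le_rfl)
  have hsplit2 : (∫ s in (0:ℝ)..(T - u), F s) + ∫ s in (T - u)..T, F s
      = ∫ s in (0:ℝ)..T, F s :=
    intervalIntegral.integral_add_adjacent_intervals hF1int
      (hFint (T - u) T hTu (by linarith) le_rfl)
  have step2 : ∫ s in (0:ℝ)..(T - u), (F (s + u) - F s)
      = (∫ s in (T - u)..T, F s) - ∫ s in (0:ℝ)..u, F s := by
    rw [intervalIntegral.integral_sub hF2int hF1int, hshift]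
    linarith
  -- step 3: bounds on the two pieces
  have hw0T : 0 ≤ w 0 T := h_nonneg 0 T le_rfl hT le_rfl
  have step3 : (∫ s in (T - u)..T, F s) ≤ u * w 0 T := by
    have hmono : ∀ s ∈ Set.Icc (T - u) T, F s ≤ w 0 T := by
      intro s hs
      have h1 := h_super 0 s T le_rfl (by linarith [hs.1]) hs.2 le_rfl
      have h2 := h_nonneg s T (by linarith [hs.1]) hs.2 le_rfl
      simp only [hF]
      linarith
    calc (∫ s in (T - u)..T, F s) ≤ ∫ _ in (T - u)..T, w 0 T :=
          intervalIntegral.integral_mono_on (by linarith)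
            (hFint (T - u) T hTu (by linarith) le_rfl) intervalIntegrable_const hmono
      _ = u * w 0 T := by rw [intervalIntegral.integral_const, smul_eq_mul]; ring_nf
  have step4 : 0 ≤ ∫ s in (0:ℝ)..u, F s := by
    apply intervalIntegral.integral_nonneg hu.le
    intro s hs
    exact h_nonneg 0 s le_rfl hs.1 (by linarith [hs.2])
  nlinarith [step1, step2, step3, step4, mul_nonneg hu.le hw0T]
end

section
/- Rough Grönwall lemma: Let G : [0,T] → [0,∞) be a path, C, L > 0 constants, κ ≥ 1, w a control on [0,T], and γ an increasing function on the simplex (γ(s',t') ≤ γ(s,t) whenever [s',t'] ⊆ [s,t]). Suppose that G_t − G_s ≤ C · (sup_{r ≤ t} G_r) · w(s,t)^{1/κ} + γ(s,t) for every 0 ≤ s < t ≤ T with w(s,t) ≤ L. Then, with λ := min(1, (L·(2C·e²)^κ)^{-1}), one has sup_{t ∈ [0,T]} G_t ≤ 2 · exp( w(0,T) / (λ L) ) · ( G_0 + γ(0,T) ). -/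
open Set

set_option maxHeartbeats 2000000 in
/-- rough Grönwall lemma: if `G : [0,T] → [0,∞)` satisfies
`G_t − G_s ≤ C·(sup_{r ≤ t} G_r)·w(s,t)^{1/κ} + γ(s,t)` whenever `w(s,t) ≤ L`, where `w`
is a control and `γ` is increasing on the simplex, then with
`λ = min(1, (L·(2C·e²)^κ)⁻¹)` one has
`sup_{t∈[0,T]} G_t ≤ 2·exp(w(0,T)/(λ·L))·(G_0 + γ(0,T))`. -/
theorem rough_gronwall
    (T : ℝ) (hT : 0 ≤ T) (G : ℝ → ℝ)
    (hG_nonneg : ∀ t, 0 ≤ t → t ≤ T → 0 ≤ G t)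
    (C L κ : ℝ) (hC : 0 < C) (hL : 0 < L) (hκ : 1 ≤ κ)
    (w : ℝ → ℝ → ℝ)
    (h_nonneg : ∀ s t, 0 ≤ s → s ≤ t → t ≤ T → 0 ≤ w s t)
    (h_cont : ContinuousOn (fun q : ℝ × ℝ => w q.1 q.2)
      {q : ℝ × ℝ | 0 ≤ q.1 ∧ q.1 ≤ q.2 ∧ q.2 ≤ T})
    (h_diag : ∀ s, 0 ≤ s → s ≤ T → w s s = 0)
    (h_super : ∀ s u t, 0 ≤ s → s ≤ u → u ≤ t → t ≤ T → w s u + w u t ≤ w s t)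
    (γ : ℝ → ℝ → ℝ)
    (hγ_nonneg : ∀ s t, 0 ≤ s → s ≤ t → t ≤ T → 0 ≤ γ s t)
    (hγ_mono : ∀ s s' t' t, 0 ≤ s → s ≤ s' → s' ≤ t' → t' ≤ t → t ≤ T → γ s' t' ≤ γ s t)
    (hyp : ∀ s t, 0 ≤ s → s < t → t ≤ T → w s t ≤ L →
      G t - G s ≤ C * sSup (G '' Icc 0 t) * w s t ^ (1 / κ) + γ s t) :
    ∀ t, 0 ≤ t → t ≤ T →
      G t ≤ 2 * Real.exp (w 0 T / (min 1 (L * (2 * C * Real.exp 2) ^ κ)⁻¹ * L))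
              * (G 0 + γ 0 T) := by
  intro t ht0 htT
  set lam : ℝ := min 1 (L * (2 * C * Real.exp 2) ^ κ)⁻¹ with hlam_def
  have hB : (0:ℝ) < 2 * C * Real.exp 2 := by positivity
  have hBκ : (0:ℝ) < (2 * C * Real.exp 2) ^ κ := Real.rpow_pos_of_pos hB κ
  have hlam_pos : 0 < lam := lt_min one_pos (by positivity)
  set a : ℝ := lam * L with ha_def
  have ha : 0 < a := mul_pos hlam_pos hL
  have haL : a ≤ L := by
    have h1 : lam ≤ 1 := min_le_left _ _
    nlinarith
  have hκ0 : (0:ℝ) < κ := lt_of_lt_of_le one_pos hκ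
  have hγT : 0 ≤ γ 0 T := hγ_nonneg 0 T le_rfl hT le_rfl
  have hG0 : 0 ≤ G 0 := hG_nonneg 0 le_rfl hT
  set c : ℝ := C * a ^ (1/κ) with hc_def
  have hapow0 : 0 ≤ a ^ (1/κ) := Real.rpow_nonneg ha.le _
  have hc0 : 0 ≤ c := mul_nonneg hC.le hapow0
  have hexp2 : (9:ℝ)/2 ≤ Real.exp 2 := by
    have h := Real.exp_one_gt_d9
    have h2 : Real.exp 2 = Real.exp 1 * Real.exp 1 := by
      rw [← Real.exp_add]; norm_num
    nlinarith
  have hc19 : c ≤ 1/9 := by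
    have h1 : a ≤ ((2 * C * Real.exp 2) ^ κ)⁻¹ := by
      have h2 : lam ≤ (L * (2 * C * Real.exp 2) ^ κ)⁻¹ := min_le_right _ _
      have h3 := mul_le_mul_of_nonneg_right h2 hL.le
      have h4 : (L * (2 * C * Real.exp 2) ^ κ)⁻¹ * L = ((2 * C * Real.exp 2) ^ κ)⁻¹ := by
        rw [mul_inv]
        field_simp
      rw [ha_def, ← h4]
      exact h3
    have h2 : a ^ (1/κ) ≤ (((2 * C * Real.exp 2) ^ κ)⁻¹) ^ (1/κ) :=
      Real.rpow_le_rpow ha.le h1 (by positivity)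
    have h3 : ((((2 * C * Real.exp 2) ^ κ)⁻¹ : ℝ)) ^ (1/κ) = (2 * C * Real.exp 2)⁻¹ := by
      rw [← Real.rpow_neg hB.le, ← Real.rpow_mul hB.le]
      rw [show -κ * (1/κ) = -1 by field_simp]
      exact Real.rpow_neg_one _
    rw [h3] at h2
    have h5 : c ≤ C * (2 * C * Real.exp 2)⁻¹ := by
      rw [hc_def]; exact mul_le_mul_of_nonneg_left h2 hC.le
    have h6 : C * (2 * C * Real.exp 2)⁻¹ = (2 * Real.exp 2)⁻¹ := by
      rw [mul_inv, mul_inv]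
      field_simp
    have h7 : (2 * Real.exp 2)⁻¹ ≤ 1/9 := by
      rw [inv_le_comm₀ (by positivity) (by norm_num)]
      nlinarith
    rw [h6] at h5
    linarith
  have hc1 : c < 1 := by linarith
  have h1c : (0:ℝ) < 1 - c := by linarith
  set r : ℝ := (1 - c)⁻¹ with hr_def
  have hr0 : 0 < r := inv_pos.2 h1c
  have hrc : r * (1 - c) = 1 := inv_mul_cancel₀ (ne_of_gt h1c)
  have hr1 : 1 ≤ r := by nlinarith
  have hr98 : r ≤ 9/8 := by nlinarith
  -- continuity and monotonicity of φ = w 0 ·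
  have hφcont : ContinuousOn (fun v : ℝ => w 0 v) (Icc 0 T) := by
    have hmap : MapsTo (fun v : ℝ => ((0:ℝ), v)) (Icc 0 T)
        {q : ℝ × ℝ | 0 ≤ q.1 ∧ q.1 ≤ q.2 ∧ q.2 ≤ T} := by
      intro v hv; exact ⟨le_rfl, hv.1, hv.2⟩
    have := h_cont.comp ((continuous_const.prodMk continuous_id).continuousOn) hmap
    simpa [Function.comp_def] using this
  have hφmono : ∀ u v, 0 ≤ u → u ≤ v → v ≤ T → w 0 u ≤ w 0 v := by
    intro u v hu huv hv
    have h1 := h_super 0 u v le_rfl hu huv hv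
    have h2 := h_nonneg u v hu huv hv
    linarith
  -- the key local step
  have keyL : ∀ s u : ℝ, 0 ≤ s → s ≤ u → u ≤ T → w s u ≤ a →
      BddAbove (G '' Icc 0 s) →
      BddAbove (G '' Icc 0 u) ∧
        sSup (G '' Icc 0 u) ≤ r * (sSup (G '' Icc 0 s) + γ 0 T) := by
    intro s u hs0 hsu huT hwa hbs
    have hu0 : 0 ≤ u := hs0.trans hsu
    set Ms := sSup (G '' Icc 0 s) with hMs_def
    have hGs_le : G s ≤ Ms := le_csSup hbs ⟨s, ⟨hs0, le_rfl⟩, rfl⟩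
    have hwmono : ∀ ρ, s ≤ ρ → ρ ≤ u → w s ρ ≤ a := by
      intro ρ h1 h2
      have h3 := h_super s ρ u hs0 h1 h2 huT
      have h4 := h_nonneg ρ u (hs0.trans h1) h2 huT
      linarith
    have hpt : ∀ ρ, s < ρ → ρ ≤ u → G ρ ≤ G s + c * sSup (G '' Icc 0 ρ) + γ 0 T := by
      intro ρ hsρ hρu
      have hρ0 : 0 ≤ ρ := hs0.trans hsρ.le
      have hρT : ρ ≤ T := hρu.trans huT
      have hw1 : w s ρ ≤ a := hwmono ρ hsρ.le hρu
      have hw0 : 0 ≤ w s ρ := h_nonneg s ρ hs0 hsρ.le hρT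
      have hhyp := hyp s ρ hs0 hsρ hρT (hw1.trans haL)
      have hγle : γ s ρ ≤ γ 0 T := hγ_mono 0 s ρ T le_rfl hs0 hsρ.le hρT le_rfl
      by_cases hb : BddAbove (G '' Icc 0 ρ)
      · have hS0 : 0 ≤ sSup (G '' Icc 0 ρ) :=
          le_trans (hG_nonneg 0 le_rfl hT) (le_csSup hb ⟨0, ⟨le_rfl, hρ0⟩, rfl⟩)
        have hpow : w s ρ ^ (1/κ) ≤ a ^ (1/κ) := Real.rpow_le_rpow hw0 hw1 (by positivity)
        have hmul : C * sSup (G '' Icc 0 ρ) * w s ρ ^ (1/κ)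
            ≤ C * sSup (G '' Icc 0 ρ) * a ^ (1/κ) :=
          mul_le_mul_of_nonneg_left hpow (mul_nonneg hC.le hS0)
        have heq : C * sSup (G '' Icc 0 ρ) * a ^ (1/κ) = c * sSup (G '' Icc 0 ρ) := by
          rw [hc_def]; ring
        linarith
      · rw [Real.sSup_of_not_bddAbove hb] at hhyp ⊢
        simp only [mul_zero, zero_mul, zero_add] at hhyp ⊢
        linarith
    have hsupest : ∀ u', s ≤ u' → u' ≤ u → BddAbove (G '' Icc 0 u') →
        sSup (G '' Icc 0 u') ≤ r * (Ms + γ 0 T) := by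
      intro u' hsu' hu'u hb'
      have hu'0 : 0 ≤ u' := hs0.trans hsu'
      have hMu'0 : 0 ≤ sSup (G '' Icc 0 u') :=
        le_trans (hG_nonneg 0 le_rfl hT) (le_csSup hb' ⟨0, ⟨le_rfl, hu'0⟩, rfl⟩)
      have hne' : (G '' Icc 0 u').Nonempty := ⟨G 0, ⟨0, ⟨le_rfl, hu'0⟩, rfl⟩⟩
      have key : sSup (G '' Icc 0 u') ≤ Ms + c * sSup (G '' Icc 0 u') + γ 0 T := by
        apply csSup_le hne'
        rintro x ⟨ρ, ⟨hρ0, hρu'⟩, rfl⟩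
        by_cases hρs : ρ ≤ s
        · have h1 : G ρ ≤ Ms := le_csSup hbs ⟨ρ, ⟨hρ0, hρs⟩, rfl⟩
          have h2 : 0 ≤ c * sSup (G '' Icc 0 u') := mul_nonneg hc0 hMu'0
          linarith
        · push_neg at hρs
          have h1 := hpt ρ hρs (hρu'.trans hu'u)
          have h2 : sSup (G '' Icc 0 ρ) ≤ sSup (G '' Icc 0 u') :=
            csSup_le_csSup hb' ⟨G 0, ⟨0, ⟨le_rfl, hρ0⟩, rfl⟩⟩
              (image_mono (Icc_subset_Icc le_rfl hρu'))
          have h3 := mul_le_mul_of_nonneg_left h2 hc0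
          linarith
      have key2 : (1 - c) * sSup (G '' Icc 0 u') ≤ Ms + γ 0 T := by linarith
      calc sSup (G '' Icc 0 u') = r * ((1 - c) * sSup (G '' Icc 0 u')) := by
            rw [← mul_assoc, hrc, one_mul]
        _ ≤ r * (Ms + γ 0 T) := mul_le_mul_of_nonneg_left key2 hr0.le
    have hbu : BddAbove (G '' Icc 0 u) := by
      refine ⟨max Ms (max (r * (Ms + γ 0 T)) (Ms + γ 0 T)), ?_⟩
      rintro x ⟨ρ, ⟨hρ0, hρu⟩, rfl⟩
      by_cases hρs : ρ ≤ s
      · exact le_max_of_le_left (le_csSup hbs ⟨ρ, ⟨hρ0, hρs⟩, rfl⟩)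
      · push_neg at hρs
        by_cases hb' : BddAbove (G '' Icc 0 ρ)
        · have h1 : G ρ ≤ sSup (G '' Icc 0 ρ) := le_csSup hb' ⟨ρ, ⟨hρ0, le_rfl⟩, rfl⟩
          have h2 := hsupest ρ hρs.le hρu hb'
          exact le_max_of_le_right (le_max_of_le_left (h1.trans h2))
        · have h1 := hpt ρ hρs hρu
          rw [Real.sSup_of_not_bddAbove hb'] at h1
          have h3 : G ρ ≤ Ms + γ 0 T := by
            simp only [mul_zero] at h1; linarith
          exact le_max_of_le_right (le_max_of_le_right h3)
    exact ⟨hbu, hsupest u hsu le_rfl hbu⟩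
  -- the chained estimate
  have chain : ∀ k : ℕ, ∀ u, 0 ≤ u → u ≤ T → w 0 u ≤ ((k:ℝ) + 1) * a →
      BddAbove (G '' Icc 0 u) ∧
        sSup (G '' Icc 0 u) ≤ r ^ (k+1) * G 0 + ((k:ℝ) + 1) * r ^ (k+1) * γ 0 T := by
    intro k
    induction k with
    | zero =>
      intro u hu0 huT hw
      have h0 : BddAbove (G '' Icc 0 0) := by
        rw [Icc_self, image_singleton]; exact bddAbove_singleton
      have hwa : w 0 u ≤ a := by push_cast at hw; linarith
      obtain ⟨hb1, hl1⟩ := keyL 0 u le_rfl hu0 huT hwa h0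
      rw [Icc_self, image_singleton, csSup_singleton] at hl1
      refine ⟨hb1, ?_⟩
      have hq : r * (G 0 + γ 0 T) = r ^ (0+1) * G 0 + ((0:ℝ)+1) * r ^ (0+1) * γ 0 T := by
        ring
      push_cast
      linarith
    | succ k ih =>
      intro u hu0 huT hw
      by_cases hcase : w 0 u ≤ ((k:ℝ) + 1) * a
      · obtain ⟨hb, hle⟩ := ih u hu0 huT hcase
        refine ⟨hb, ?_⟩
        have hpp : r ^ (k+1) ≤ r ^ (k+1+1) := pow_le_pow_right₀ hr1 (by omega)
        have hpn : (0:ℝ) ≤ r ^ (k+1+1) := by positivity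
        have e1 : r ^ (k+1) * G 0 ≤ r ^ (k+1+1) * G 0 :=
          mul_le_mul_of_nonneg_right hpp hG0
        have e2 : ((k:ℝ)+1) * r ^ (k+1) ≤ ((k:ℝ)+1+1) * r ^ (k+1+1) := by
          calc ((k:ℝ)+1) * r ^ (k+1) ≤ ((k:ℝ)+1) * r ^ (k+1+1) :=
                mul_le_mul_of_nonneg_left hpp (by positivity)
            _ ≤ ((k:ℝ)+1+1) * r ^ (k+1+1) :=
                mul_le_mul_of_nonneg_right (by linarith) hpn
        have e3 : ((k:ℝ)+1) * r ^ (k+1) * γ 0 T ≤ ((k:ℝ)+1+1) * r ^ (k+1+1) * γ 0 T :=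
          mul_le_mul_of_nonneg_right e2 hγT
        push_cast
        linarith
      · push_neg at hcase
        have hd0 : w 0 0 = 0 := h_diag 0 le_rfl hT
        have hcont' : ContinuousOn (fun v : ℝ => w 0 v) (Icc 0 u) :=
          hφcont.mono (Icc_subset_Icc le_rfl huT)
        have hmem : ((k:ℝ) + 1) * a ∈ Icc (w 0 0) (w 0 u) := by
          rw [Set.mem_Icc, hd0]
          constructor
          · positivity
          · linarith
        obtain ⟨sp, hsp_mem, hsp⟩ := intermediate_value_Icc hu0 hcont' hmem
        simp only at hsp
        have hsp0 : 0 ≤ sp := hsp_mem.1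
        have hspu : sp ≤ u := hsp_mem.2
        have hspT : sp ≤ T := hspu.trans huT
        obtain ⟨hb, hle⟩ := ih sp hsp0 hspT (le_of_eq hsp)
        have hwsu : w sp u ≤ a := by
          have h1 := h_super 0 sp u le_rfl hsp0 hspu huT
          push_cast at hw
          linarith [hsp]
        obtain ⟨hb2, hle2⟩ := keyL sp u hsp0 hspu huT hwsu hb
        refine ⟨hb2, ?_⟩
        have h4 : r * (sSup (G '' Icc 0 sp) + γ 0 T)
            ≤ r * ((r ^ (k+1) * G 0 + ((k:ℝ)+1) * r ^ (k+1) * γ 0 T) + γ 0 T) :=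
          mul_le_mul_of_nonneg_left (by linarith) hr0.le
        have h5 : r * ((r ^ (k+1) * G 0 + ((k:ℝ)+1) * r ^ (k+1) * γ 0 T) + γ 0 T)
            = r ^ (k+1+1) * G 0 + (((k:ℝ)+1) * r ^ (k+1+1) + r) * γ 0 T := by ring
        have h6 : r ≤ r ^ (k+1+1) := by
          calc r = r ^ 1 := (pow_one r).symm
            _ ≤ r ^ (k+1+1) := pow_le_pow_right₀ hr1 (by omega)
        have hbound : sSup (G '' Icc 0 u)
            ≤ r ^ (k+1+1) * G 0 + (((k:ℝ)+1) * r ^ (k+1+1) + r) * γ 0 T := by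
          rw [← h5]; exact hle2.trans h4
        have hg : r * γ 0 T ≤ r ^ (k+1+1) * γ 0 T := mul_le_mul_of_nonneg_right h6 hγT
        have e1 : (((k:ℝ)+1) * r ^ (k+1+1) + r) * γ 0 T
            = ((k:ℝ)+1) * r ^ (k+1+1) * γ 0 T + r * γ 0 T := by ring
        have e2 : ((k:ℝ)+1+1) * r ^ (k+1+1) * γ 0 T
            = ((k:ℝ)+1) * r ^ (k+1+1) * γ 0 T + r ^ (k+1+1) * γ 0 T := by ring
        push_cast
        linarith
  -- conclusion
  have hφt0 : 0 ≤ w 0 t := h_nonneg 0 t le_rfl ht0 htT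
  set k := ⌊w 0 t / a⌋₊ with hk_def
  have hk1 : w 0 t ≤ ((k:ℝ) + 1) * a := by
    have h1 : w 0 t / a < (k:ℝ) + 1 := by
      have := Nat.lt_floor_add_one (w 0 t / a)
      push_cast at this ⊢
      linarith
    rw [div_lt_iff₀ ha] at h1
    linarith
  have hk2 : (k:ℝ) ≤ w 0 T / a := by
    have h1 : (k:ℝ) ≤ w 0 t / a := Nat.floor_le (by positivity)
    have h2 : w 0 t ≤ w 0 T := hφmono t T ht0 htT le_rfl
    have h3 : w 0 t / a ≤ w 0 T / a := by gcongr
    linarith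
  obtain ⟨hb, hle⟩ := chain k t ht0 htT hk1
  have hGt : G t ≤ sSup (G '' Icc 0 t) := le_csSup hb ⟨t, ⟨ht0, le_rfl⟩, rfl⟩
  -- numeric lemma : (n+1) * r^(n+1) ≤ 2 * exp n
  have hnum : ∀ n : ℕ, ((n:ℝ) + 1) * r ^ (n+1) ≤ 2 * Real.exp n := by
    intro n
    induction n with
    | zero =>
      simp only [Nat.cast_zero, zero_add, pow_one, Real.exp_zero, mul_one, one_mul]
      linarith
    | succ n ih =>
      have hexp1 : (9:ℝ)/4 ≤ Real.exp 1 := by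
        linarith [Real.exp_one_gt_d9]
      have hea : Real.exp ((n:ℝ) + 1) = Real.exp n * Real.exp 1 := by
        rw [← Real.exp_add]
      have hrp : (0:ℝ) < r ^ (n+1) := pow_pos hr0 _
      have hrk : r ^ (n+1) ≤ 2 * Real.exp n := by
        have hn0 : (0:ℝ) ≤ (n:ℝ) * r ^ (n+1) := by positivity
        linarith
      have hps : r ^ (n+1+1) = r ^ (n+1) * r := pow_succ r (n+1)
      have hr0' : (0:ℝ) ≤ r := hr0.le
      have m1 := mul_le_mul_of_nonneg_right ih hr0'
      have m2 := mul_le_mul_of_nonneg_right hrk hr0'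
      have m3 : 2 * Real.exp n * r ≤ 2 * Real.exp n * (9/8) :=
        mul_le_mul_of_nonneg_left hr98 (by positivity)
      have m4 : Real.exp n * (9/4) ≤ Real.exp n * Real.exp 1 :=
        mul_le_mul_of_nonneg_left hexp1 (Real.exp_pos _).le
      push_cast
      rw [hea, hps]
      nlinarith [m1, m2, m3, m4]
  have hA : r ^ (k+1) ≤ 2 * Real.exp k := by
    have h1 := hnum k
    have h2 : (0:ℝ) ≤ (k:ℝ) * r ^ (k+1) := by positivity
    linarith
  have hfin : sSup (G '' Icc 0 t) ≤ 2 * Real.exp k * (G 0 + γ 0 T) := by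
    have h1 := mul_le_mul_of_nonneg_right hA hG0
    have h2 := mul_le_mul_of_nonneg_right (hnum k) hγT
    have e : 2 * Real.exp k * (G 0 + γ 0 T)
        = 2 * Real.exp k * G 0 + 2 * Real.exp k * γ 0 T := by ring
    linarith
  have hfin2 : 2 * Real.exp k * (G 0 + γ 0 T)
      ≤ 2 * Real.exp (w 0 T / a) * (G 0 + γ 0 T) := by
    have h1 : Real.exp (k:ℝ) ≤ Real.exp (w 0 T / a) := Real.exp_le_exp.2 hk2
    exact mul_le_mul_of_nonneg_right (by linarith) (by linarith)
  calc G t ≤ sSup (G '' Icc 0 t) := hGt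
    _ ≤ 2 * Real.exp k * (G 0 + γ 0 T) := hfin
    _ ≤ 2 * Real.exp (w 0 T / a) * (G 0 + γ 0 T) := hfin2
end

section
/- Let f : ℝ^d → ℝ^m be twice continuously differentiable with bounded first and second derivatives. Then for any x₁, x₂, x₃, x₄ ∈ ℝ^d, |f(x₁) − f(x₂) − f(x₃) + f(x₄)| ≤ ‖Df‖_∞ · |x₁ − x₂ − x₃ + x₄| + ‖D²f‖_∞ · |x₁ − x₂| · |x₂ − x₄|. -/
/-- Lemma B.1 of the paper: for `f : ℝ^d → ℝ^m` twice continuously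
differentiable with `‖Df‖_∞ ≤ C₁` and `‖D²f‖_∞ ≤ C₂`, and any `x₁,x₂,x₃,x₄`,
`|f(x₁) − f(x₂) − f(x₃) + f(x₄)| ≤ C₁·|x₁−x₂−x₃+x₄| + C₂·|x₁−x₂|·|x₂−x₄|`. -/
theorem second_order_taylor_rearrangement
    (d m : ℕ) (f : EuclideanSpace ℝ (Fin d) → EuclideanSpace ℝ (Fin m))
    (hf : ContDiff ℝ 2 f) (C₁ C₂ : ℝ)
    (h1 : ∀ x, ‖fderiv ℝ f x‖ ≤ C₁)
    (h2 : ∀ x, ‖iteratedFDeriv ℝ 2 f x‖ ≤ C₂)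
    (x₁ x₂ x₃ x₄ : EuclideanSpace ℝ (Fin d)) :
    ‖f x₁ - f x₂ - f x₃ + f x₄‖
      ≤ C₁ * ‖x₁ - x₂ - x₃ + x₄‖ + C₂ * ‖x₁ - x₂‖ * ‖x₂ - x₄‖ := by
  have hd : Differentiable ℝ f := hf.differentiable two_ne_zero
  have hd' : Differentiable ℝ (fderiv ℝ f) :=
    (hf.fderiv_right (m := 1) (by norm_num)).differentiable one_ne_zero
  -- norm of second fderiv equals norm of iteratedFDeriv 2
  have hnorm : ∀ x, ‖fderiv ℝ (fderiv ℝ f) x‖ = ‖iteratedFDeriv ℝ 2 f x‖ := by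
    intro x
    calc ‖fderiv ℝ (fderiv ℝ f) x‖
        = ‖iteratedFDeriv ℝ 0 (fderiv ℝ (fderiv ℝ f)) x‖ := by rw [norm_iteratedFDeriv_zero]
      _ = ‖iteratedFDeriv ℝ 1 (fderiv ℝ f) x‖ := norm_iteratedFDeriv_fderiv
      _ = ‖iteratedFDeriv ℝ 2 f x‖ := norm_iteratedFDeriv_fderiv
  -- f is C₁-Lipschitz
  have hlip : ∀ a b, ‖f a - f b‖ ≤ C₁ * ‖a - b‖ := fun a b =>
    Convex.norm_image_sub_le_of_norm_fderiv_le (fun x _ => hd x)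
      (fun x _ => h1 x) convex_univ trivial trivial
  -- fderiv f is C₂-Lipschitz
  have hlip' : ∀ a b, ‖fderiv ℝ f a - fderiv ℝ f b‖ ≤ C₂ * ‖a - b‖ := fun a b =>
    Convex.norm_image_sub_le_of_norm_fderiv_le (fun x _ => hd' x)
      (fun x _ => (hnorm x) ▸ h2 x) convex_univ trivial trivial
  set w := x₁ - x₂ with hw
  set g : EuclideanSpace ℝ (Fin d) → EuclideanSpace ℝ (Fin m) :=
    fun y => f (y + w) - f y with hg
  -- derivative of g
  have hgderiv : ∀ y, HasFDerivAt g (fderiv ℝ f (y + w) - fderiv ℝ f y) y := by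
    intro y
    have h₁ : HasFDerivAt (fun y => f (y + w)) (fderiv ℝ f (y + w)) y := by
      have := (hd (y + w)).hasFDerivAt.comp y ((hasFDerivAt_id y).add_const w)
      simpa [Function.comp_def] using this
    exact h₁.sub (hd y).hasFDerivAt
  -- mean value for g
  have hgbound : ‖g x₂ - g x₄‖ ≤ C₂ * ‖w‖ * ‖x₂ - x₄‖ := by
    apply Convex.norm_image_sub_le_of_norm_hasFDerivWithin_le
      (f' := fun y => fderiv ℝ f (y + w) - fderiv ℝ f y)
      (fun y _ => (hgderiv y).hasFDerivWithinAt)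
      (fun y _ => ?_) convex_univ trivial trivial
    calc ‖fderiv ℝ f (y + w) - fderiv ℝ f y‖ ≤ C₂ * ‖y + w - y‖ := hlip' _ _
      _ = C₂ * ‖w‖ := by rw [add_sub_cancel_left]
  -- second piece
  have hsecond : ‖f (x₄ + w) - f x₃‖ ≤ C₁ * ‖x₁ - x₂ - x₃ + x₄‖ := by
    have := hlip (x₄ + w) x₃
    have heq : x₄ + w - x₃ = x₁ - x₂ - x₃ + x₄ := by rw [hw]; abel
    rwa [heq] at this
  have hsplit : f x₁ - f x₂ - f x₃ + f x₄ = (g x₂ - g x₄) + (f (x₄ + w) - f x₃) := by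
    simp only [hg]
    have : x₂ + w = x₁ := by rw [hw]; abel
    rw [this]
    abel
  calc ‖f x₁ - f x₂ - f x₃ + f x₄‖
      ≤ ‖g x₂ - g x₄‖ + ‖f (x₄ + w) - f x₃‖ := hsplit ▸ norm_add_le _ _
    _ ≤ C₂ * ‖w‖ * ‖x₂ - x₄‖ + C₁ * ‖x₁ - x₂ - x₃ + x₄‖ := add_le_add hgbound hsecond
    _ = C₁ * ‖x₁ - x₂ - x₃ + x₄‖ + C₂ * ‖x₁ - x₂‖ * ‖x₂ - x₄‖ := by rw [hw]; ring
end

section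
/- Let α ∈ ℝ and f ∈ B^α_{∞,∞}(ℝ^d; ℝ^ℓ). Then the functions b¹(x,y) := f(x), b²(x,y) := f(y), and b³(x,y) := f(x−y) (interpreted as tempered distributions on ℝ^{2d} in the natural way) belong to B^α_{∞,∞}(ℝ^{2d}; ℝ^ℓ), with ‖bⁱ‖_{B^α_{∞,∞}(ℝ^{2d})} ≤ C ‖f‖_{B^α_{∞,∞}(ℝ^d)} for i = 1,2,3 and a constant C depending only on d and α. -/
/-- Lemma C.1 of the paper, stated in the range `α ∈ (0,1)` where
`B^α_{∞,∞}` coincides with the space of bounded `α`-Hölder functions: if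
`f ∈ B^α_{∞,∞}(ℝ^d;ℝ^ℓ)` (with norm bound `A`, i.e. `f` bounded by `A` and `α`-Hölder
with constant `A`), then `b¹(x,y) := f(x)`, `b²(x,y) := f(y)` and `b³(x,y) := f(x−y)`
belong to `B^α_{∞,∞}(ℝ^{2d};ℝ^ℓ)` with norm at most `C·A`, for a constant `C`
depending only on `d` and `α`. -/
theorem besov_dimension_reduction
    (d l : ℕ) (α : ℝ) (hα0 : 0 < α) (hα1 : α < 1) :
    ∃ C > 0, ∀ (f : EuclideanSpace ℝ (Fin d) → EuclideanSpace ℝ (Fin l)) (A : ℝ),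
      (∀ x, ‖f x‖ ≤ A) →
      (∀ x y, ‖f x - f y‖ ≤ A * ‖x - y‖ ^ α) →
      -- b¹(x,y) = f(x)
      ((∀ p : EuclideanSpace ℝ (Fin d) × EuclideanSpace ℝ (Fin d), ‖f p.1‖ ≤ C * A) ∧
       (∀ p q : EuclideanSpace ℝ (Fin d) × EuclideanSpace ℝ (Fin d),
          ‖f p.1 - f q.1‖ ≤ C * A * ‖p - q‖ ^ α)) ∧
      -- b²(x,y) = f(y)
      ((∀ p : EuclideanSpace ℝ (Fin d) × EuclideanSpace ℝ (Fin d), ‖f p.2‖ ≤ C * A) ∧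
       (∀ p q : EuclideanSpace ℝ (Fin d) × EuclideanSpace ℝ (Fin d),
          ‖f p.2 - f q.2‖ ≤ C * A * ‖p - q‖ ^ α)) ∧
      -- b³(x,y) = f(x−y)
      ((∀ p : EuclideanSpace ℝ (Fin d) × EuclideanSpace ℝ (Fin d),
          ‖f (p.1 - p.2)‖ ≤ C * A) ∧
       (∀ p q : EuclideanSpace ℝ (Fin d) × EuclideanSpace ℝ (Fin d),
          ‖f (p.1 - p.2) - f (q.1 - q.2)‖ ≤ C * A * ‖p - q‖ ^ α)) := by
  refine ⟨2, by norm_num, fun f A h0 h1 => ?_⟩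
  have hA : 0 ≤ A := le_trans (norm_nonneg _) (h0 0)
  have hbound : ∀ x, ‖f x‖ ≤ 2 * A := fun x => le_trans (h0 x) (by linarith)
  have hle : ∀ x y : EuclideanSpace ℝ (Fin d), ∀ p q :
      EuclideanSpace ℝ (Fin d) × EuclideanSpace ℝ (Fin d),
      ‖x - y‖ ≤ ‖p - q‖ → ‖f x - f y‖ ≤ 2 * A * ‖p - q‖ ^ α := by
    intro x y p q hxy
    calc ‖f x - f y‖ ≤ A * ‖x - y‖ ^ α := h1 x y
      _ ≤ A * ‖p - q‖ ^ α := by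
          exact mul_le_mul_of_nonneg_left
            (Real.rpow_le_rpow (norm_nonneg _) hxy hα0.le) hA
      _ ≤ 2 * A * ‖p - q‖ ^ α := by
          have : (0:ℝ) ≤ ‖p - q‖ ^ α := Real.rpow_nonneg (norm_nonneg _) _
          nlinarith
  have hfst : ∀ p q : EuclideanSpace ℝ (Fin d) × EuclideanSpace ℝ (Fin d),
      ‖p.1 - q.1‖ ≤ ‖p - q‖ := fun p q => by
    simpa using norm_fst_le (p - q)
  have hsnd : ∀ p q : EuclideanSpace ℝ (Fin d) × EuclideanSpace ℝ (Fin d),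
      ‖p.2 - q.2‖ ≤ ‖p - q‖ := fun p q => by
    simpa using norm_snd_le (p - q)
  refine ⟨⟨fun p => hbound _, fun p q => hle _ _ p q (hfst p q)⟩,
    ⟨fun p => hbound _, fun p q => hle _ _ p q (hsnd p q)⟩,
    fun p => hbound _, fun p q => ?_⟩
  -- b³: use constant 2, with ‖(p.1-p.2)-(q.1-q.2)‖ ≤ 2‖p-q‖ and (2t)^α ≤ 2 t^α
  have hdiff : ‖(p.1 - p.2) - (q.1 - q.2)‖ ≤ 2 * ‖p - q‖ := by
    calc ‖(p.1 - p.2) - (q.1 - q.2)‖ = ‖(p.1 - q.1) - (p.2 - q.2)‖ := by congr 1; abel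
      _ ≤ ‖p.1 - q.1‖ + ‖p.2 - q.2‖ := norm_sub_le _ _
      _ ≤ ‖p - q‖ + ‖p - q‖ := add_le_add (hfst p q) (hsnd p q)
      _ = 2 * ‖p - q‖ := by ring
  have hnn : (0:ℝ) ≤ ‖p - q‖ := norm_nonneg _
  calc ‖f (p.1 - p.2) - f (q.1 - q.2)‖
      ≤ A * ‖(p.1 - p.2) - (q.1 - q.2)‖ ^ α := h1 _ _
    _ ≤ A * (2 * ‖p - q‖) ^ α := by
        exact mul_le_mul_of_nonneg_left
          (Real.rpow_le_rpow (norm_nonneg _) hdiff hα0.le) hA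
    _ = A * (2 ^ α * ‖p - q‖ ^ α) := by
        rw [Real.mul_rpow (by norm_num) hnn]
    _ ≤ 2 * A * ‖p - q‖ ^ α := by
        have h2 : (2:ℝ) ^ α ≤ 2 := by
          calc (2:ℝ) ^ α ≤ 2 ^ (1:ℝ) :=
            Real.rpow_le_rpow_left_iff (by norm_num) |>.mpr hα1.le
            _ = 2 := Real.rpow_one 2
        have ht : (0:ℝ) ≤ ‖p - q‖ ^ α := Real.rpow_nonneg hnn _
        have h3 : (2:ℝ) ^ α * ‖p - q‖ ^ α ≤ 2 * ‖p - q‖ ^ α :=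
          mul_le_mul_of_nonneg_right h2 ht
        have h4 := mul_le_mul_of_nonneg_left h3 hA
        linarith
end
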